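/- Let B be a bounded operator on a complex Hilbert space K satisfying B² = 0. Then B has closed range equal to ker B if and only if the self-adjoint operator D = B + B* is invertible in B(K). Consequently, a commuting d-tuple T̄ = (T₁,…,T_d) of bounded operators on H is Taylor invertible (i.e., the range of the Koszul coboundary B = T₁⊗c₁ + … + T_d⊗c_d on H⊗Λℂ^d equals ker B) if and only if its Dirac operator D = B + B* is invertible in B(H⊗Λℂ^d). -/

import Mathlib

noncomputable section
open ContinuousLinearMap

abbrev Fock (d : ℕ) := EuclideanSpace ℂ (Finset (Fin d))

def createL (d : ℕ) (k : Fin d) : Fock d →ₗ[ℂ] Fock d where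
  toFun f := WithLp.toLp 2 fun (S : Finset (Fin d)) =>
    if k ∈ S then ((-1 : ℂ) ^ (S.filter (fun j => j < k)).card) * f (S.erase k) else 0
  map_add' f g := by
    ext S; by_cases h : k ∈ S <;> simp [h, PiLp.add_apply, mul_add]
  map_smul' c f := by
    ext S; by_cases h : k ∈ S <;> simp [h, PiLp.smul_apply, smul_eq_mul] <;> ring

def create (d : ℕ) (k : Fin d) : Fock d →L[ℂ] Fock d :=
  LinearMap.toContinuousLinearMap (createL d k)

def C0 (d : ℕ) : EuclideanSpace ℂ (Fin d) →ₗ[ℂ] (Fock d →L[ℂ] Fock d) where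
  toFun z := ∑ k, z k • create d k
  map_add' z w := by
    rw [← Finset.sum_add_distrib]
    exact Finset.sum_congr rfl fun k _ => add_smul (z k : ℂ) (w k) (create d k)
  map_smul' c z := by
    show ∑ k, (c • z) k • create d k = c • ∑ k, z k • create d k
    rw [Finset.smul_sum]
    refine Finset.sum_congr rfl fun k _ => ?_
    rw [PiLp.smul_apply, smul_eq_mul, smul_smul]

abbrev FockH (H : Type*) [NormedAddCommGroup H] [InnerProductSpace ℂ H] (d : ℕ) :=
  PiLp 2 (fun _ : Finset (Fin d) => H)

def tensorOp {H : Type*} [NormedAddCommGroup H] [InnerProductSpace ℂ H] {d : ℕ}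
    (T : H →L[ℂ] H) (A : Fock d →L[ℂ] Fock d) : FockH H d →L[ℂ] FockH H d :=
  ((PiLp.continuousLinearEquiv 2 ℂ (fun _ : Finset (Fin d) => H)).symm :
      (∀ _ : Finset (Fin d), H) →L[ℂ] FockH H d) ∘L
    (ContinuousLinearMap.pi fun S : Finset (Fin d) =>
      ∑ S' : Finset (Fin d), (A (EuclideanSpace.single S' 1) S) •
        (T ∘L ContinuousLinearMap.proj S')) ∘L
    ((PiLp.continuousLinearEquiv 2 ℂ (fun _ : Finset (Fin d) => H)) :
      FockH H d →L[ℂ] (∀ _ : Finset (Fin d), H))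

variable {H : Type*} [NormedAddCommGroup H] [InnerProductSpace ℂ H] [CompleteSpace H]

instance fockHComplete {d : ℕ} : CompleteSpace (FockH H d) :=
  inferInstanceAs (CompleteSpace (PiLp 2 (fun _ : Finset (Fin d) => H)))

/-- The Koszul coboundary operator `B = T₁⊗c₁ + ⋯ + T_d⊗c_d` on `H ⊗ Λℂ^d`. -/
def DiracB {d : ℕ} (T : Fin d → H →L[ℂ] H) : FockH H d →L[ℂ] FockH H d :=
  ∑ k, tensorOp (T k) (create d k)

/-- The Dirac operator `D = B + B*` of a commuting `d`-tuple. -/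
def DiracD {d : ℕ} (T : Fin d → H →L[ℂ] H) : FockH H d →L[ℂ] FockH H d :=
  DiracB T + adjoint (DiracB T)

/-- `C(z) = 1_H ⊗ C₀(z)` on `H ⊗ Λℂ^d`. -/
def Cop (H : Type*) [NormedAddCommGroup H] [InnerProductSpace ℂ H] (d : ℕ)
    (z : EuclideanSpace ℂ (Fin d)) : FockH H d →L[ℂ] FockH H d :=
  tensorOp (1 : H →L[ℂ] H) (C0 d z)

/-- The canonical Clifford structure `R(z) = C(z) + C(z)*` on `H ⊗ Λℂ^d`. -/
def Rop (H : Type*) [NormedAddCommGroup H] [InnerProductSpace ℂ H] [CompleteSpace H] (d : ℕ)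
    (z : EuclideanSpace ℂ (Fin d)) : FockH H d →L[ℂ] FockH H d :=
  Cop H d z + adjoint (Cop H d z)


section Aux

lemma piLp_sum_apply {ι κ : Type*} {V : ι → Type*} [∀ i, SeminormedAddCommGroup (V i)]
    (s : Finset κ) (F : κ → PiLp 2 V) (j : ι) :
    (∑ x ∈ s, F x) j = ∑ x ∈ s, F x j := by
  induction s using Finset.cons_induction with
  | empty => rfl
  | cons a s ha ih => rw [Finset.sum_cons, Finset.sum_cons, PiLp.add_apply, ih]

lemma create_apply {d : ℕ} (k : Fin d) (f : Fock d) (S : Finset (Fin d)) :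
    create d k f S =
      if k ∈ S then ((-1 : ℂ) ^ (S.filter (fun j => j < k)).card) * f (S.erase k) else 0 := rfl

lemma fock_decomp {d : ℕ} (A : Fock d →L[ℂ] Fock d) (g : Fock d) (S : Finset (Fin d)) :
    A g S = ∑ S', g S' * A (EuclideanSpace.single S' 1) S := by
  have hg : g = ∑ S', g S' • (EuclideanSpace.single S' 1 : Fock d) := by
    ext j
    rw [piLp_sum_apply]
    simp [EuclideanSpace.single_apply]
  conv_lhs => rw [hg]
  rw [map_sum, piLp_sum_apply]
  refine Finset.sum_congr rfl fun S' _ => ?_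
  rw [map_smul, PiLp.smul_apply, smul_eq_mul]

lemma tensorOp_apply {H : Type*} [NormedAddCommGroup H] [InnerProductSpace ℂ H] {d : ℕ}
    (T : H →L[ℂ] H) (A : Fock d →L[ℂ] Fock d) (x : FockH H d) (S : Finset (Fin d)) :
    tensorOp T A x S = ∑ S', A (EuclideanSpace.single S' 1) S • T (x S') := by
  show (∑ S' : Finset (Fin d), (A (EuclideanSpace.single S' 1) S) •
      (T ∘L ContinuousLinearMap.proj S')) (fun S'' => x S'') = _
  rw [ContinuousLinearMap.sum_apply]
  rfl

variable {H : Type*} [NormedAddCommGroup H] [InnerProductSpace ℂ H]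

lemma tensorOp_mul {d : ℕ} (T T' : H →L[ℂ] H) (A A' : Fock d →L[ℂ] Fock d) :
    tensorOp T A * tensorOp T' A' = tensorOp (T * T') (A * A') := by
  ext x S
  rw [mul_apply_eq_comp, tensorOp_apply, tensorOp_apply]
  calc ∑ S', A (EuclideanSpace.single S' 1) S • T (tensorOp T' A' x S')
      = ∑ S', ∑ S'', A (EuclideanSpace.single S' 1) S •
          (A' (EuclideanSpace.single S'' 1) S' • T (T' (x S''))) := by
        refine Finset.sum_congr rfl fun S' _ => ?_
        rw [tensorOp_apply, map_sum, Finset.smul_sum]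
        refine Finset.sum_congr rfl fun S'' _ => ?_
        rw [map_smul]
    _ = ∑ S'', (A * A') (EuclideanSpace.single S'' 1) S • (T * T') (x S'') := by
        rw [Finset.sum_comm]
        refine Finset.sum_congr rfl fun S'' _ => ?_
        rw [mul_apply_eq_comp, fock_decomp A (A' (EuclideanSpace.single S'' 1)) S, Finset.sum_smul]
        refine Finset.sum_congr rfl fun S' _ => ?_
        rw [smul_smul, mul_comm]
        rfl

lemma tensorOp_add {d : ℕ} (T : H →L[ℂ] H) (A A' : Fock d →L[ℂ] Fock d) :
    tensorOp T A + tensorOp T A' = tensorOp T (A + A') := by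
  ext x S
  rw [ContinuousLinearMap.add_apply, PiLp.add_apply, tensorOp_apply, tensorOp_apply,
    tensorOp_apply, ← Finset.sum_add_distrib]
  refine Finset.sum_congr rfl fun S' _ => ?_
  rw [ContinuousLinearMap.add_apply, PiLp.add_apply, add_smul]

lemma tensorOp_zero {d : ℕ} (T : H →L[ℂ] H) : tensorOp (d := d) T 0 = 0 := by
  ext x S
  rw [tensorOp_apply]
  simp

lemma create_sq {d : ℕ} (k : Fin d) : create d k * create d k = 0 := by
  ext f S
  rw [mul_apply_eq_comp, create_apply]
  by_cases h : k ∈ S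
  · rw [if_pos h, create_apply, if_neg (Finset.notMem_erase k S)]
    simp
  · rw [if_neg h]
    rfl

lemma create_comm_aux {d : ℕ} {k l : Fin d} (hkl : k < l) (f : Fock d) (S : Finset (Fin d)) :
    create d k (create d l f) S = - create d l (create d k f) S := by
  have hne : k ≠ l := ne_of_lt hkl
  by_cases hk : k ∈ S
  · by_cases hl : l ∈ S
    · rw [create_apply, if_pos hk, create_apply, if_pos (Finset.mem_erase.2 ⟨hne.symm, hl⟩),
        create_apply, if_pos hl, create_apply, if_pos (Finset.mem_erase.2 ⟨hne, hk⟩),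
        Finset.erase_right_comm]
      -- sign bookkeeping
      have h1 : (S.erase l).filter (fun j => j < k) = S.filter (fun j => j < k) := by
        rw [Finset.filter_erase]
        exact Finset.erase_eq_of_notMem (fun hmem => absurd (Finset.mem_filter.1 hmem).2
          (not_lt.2 hkl.le))
      have h2 : ((S.erase k).filter (fun j => j < l)).card + 1 =
          (S.filter (fun j => j < l)).card := by
        rw [Finset.filter_erase]
        exact Finset.card_erase_add_one (Finset.mem_filter.2 ⟨hk, hkl⟩)
      rw [h1, ← h2, pow_succ]
      ring
    · rw [create_apply, if_pos hk, create_apply,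
        if_neg (fun hmem => hl (Finset.mem_of_mem_erase hmem)), create_apply, if_neg hl]
      simp
  · by_cases hl : l ∈ S
    · rw [create_apply, if_neg hk, create_apply, if_pos hl, create_apply,
        if_neg (fun hmem => hk (Finset.mem_of_mem_erase hmem))]
      simp
    · rw [create_apply, if_neg hk, create_apply, if_neg hl]
      simp

lemma create_anticomm {d : ℕ} (k l : Fin d) :
    create d k * create d l + create d l * create d k = 0 := by
  rcases lt_trichotomy k l with h | h | h
  · ext f S
    show create d k (create d l f) S + create d l (create d k f) S = (0 : FockH ℂ d) S
    rw [create_comm_aux h]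
    simp
  · subst h
    rw [create_sq, add_zero]
  · ext f S
    show create d k (create d l f) S + create d l (create d k f) S = (0 : FockH ℂ d) S
    rw [create_comm_aux h]
    simp

set_option synthInstance.maxHeartbeats 400000 in
lemma DiracB_sq {d : ℕ} [CompleteSpace H] (T : Fin d → H →L[ℂ] H)
    (hT : ∀ i j, T i * T j = T j * T i) : DiracB T * DiracB T = 0 := by
  have hsum : DiracB T * DiracB T =
      ∑ k, ∑ l, tensorOp (T k * T l) (create d k * create d l) := by
    rw [DiracB, Finset.sum_mul_sum]
    exact Finset.sum_congr rfl fun k _ => Finset.sum_congr rfl fun l _ =>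
      tensorOp_mul (T k) (T l) (create d k) (create d l)
  have hpair : ∀ k l, tensorOp (T k * T l) (create d k * create d l) +
      tensorOp (T l * T k) (create d l * create d k) = 0 := by
    intro k l
    rw [hT l k, tensorOp_add, create_anticomm, tensorOp_zero]
  have hdouble : (DiracB T * DiracB T) + (DiracB T * DiracB T) = 0 := by
    rw [hsum]
    nth_rewrite 2 [Finset.sum_comm]
    rw [← Finset.sum_add_distrib]
    refine Finset.sum_eq_zero fun k _ => ?_
    rw [← Finset.sum_add_distrib]
    exact Finset.sum_eq_zero fun l _ => hpair k l
  ext x S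
  have hx : (DiracB T * DiracB T) x S + (DiracB T * DiracB T) x S = 0 := by
    have h4 := congrArg (fun Y : FockH H d →L[ℂ] FockH H d => Y x S) hdouble
    simpa [ContinuousLinearMap.add_apply, PiLp.add_apply] using h4
  have h2 : (2 : ℂ) • ((DiracB T * DiracB T) x S) = 0 := by rw [two_smul ℂ]; exact hx
  have h5 : ((2 : ℂ)⁻¹ * 2) • ((DiracB T * DiracB T) x S) = (2 : ℂ)⁻¹ • (0 : H) := by
    rw [mul_smul, h2]
  simpa using h5

end Aux

section Key

variable {K : Type*} [NormedAddCommGroup K] [InnerProductSpace ℂ K] [CompleteSpace K]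

local notation "⟪" x ", " y "⟫" => @inner ℂ _ _ x y

set_option maxHeartbeats 2000000 in
theorem key (B : K →L[ℂ] K) (hB : B * B = 0) :
    Set.range B = {ξ | B ξ = 0} ↔ IsUnit (B + ContinuousLinearMap.adjoint B) := by
  have hBB : ∀ x, B (B x) = 0 := fun x => by
    have := congrArg (fun f : K →L[ℂ] K => f x) hB; simpa [mul_apply_eq_comp] using this
  constructor
  · intro h
    set N : Submodule ℂ K := LinearMap.ker (B : K →ₗ[ℂ] K) with hN
    haveI : CompleteSpace N := (ContinuousLinearMap.isClosed_ker B).completeSpace_coe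
    haveI : CompleteSpace (Nᗮ : Submodule ℂ K) := N.isClosed_orthogonal.completeSpace_coe
    have hrangeN : ∀ x, B x ∈ N := fun x => LinearMap.mem_ker.2 (hBB x)
    set e' : (Nᗮ : Submodule ℂ K) →L[ℂ] N :=
      (B.comp (Nᗮ.subtypeL)).codRestrict N (fun x => hrangeN _) with he'
    have he'app : ∀ x : Nᗮ, (e' x : K) = B x := fun x => rfl
    have hker : LinearMap.ker (e' : (Nᗮ : Submodule ℂ K) →ₗ[ℂ] N) = ⊥ := by
      rw [LinearMap.ker_eq_bot']
      intro x hx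
      have hxN : (x : K) ∈ N := by
        have : B (x : K) = 0 := by
          have := congrArg (Subtype.val) hx; simpa [he'app] using this
        exact LinearMap.mem_ker.2 this
      have : (x : K) = 0 := by
        have := x.2
        have h0 : ⟪(x : K), (x : K)⟫ = 0 := (Submodule.mem_orthogonal _ _).1 x.2 _ hxN
        exact inner_self_eq_zero.1 h0
      exact Subtype.ext this
    have hsurj : LinearMap.range (e' : (Nᗮ : Submodule ℂ K) →ₗ[ℂ] N) = ⊤ := by
      rw [LinearMap.range_eq_top]
      intro y
      have : (y : K) ∈ Set.range B := by
        rw [h]; exact y.2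
      obtain ⟨x, hx⟩ := this
      obtain ⟨x₀, hx₀, x₁, hx₁, hxsum⟩ := Submodule.exists_add_mem_mem_orthogonal (K := N) x
      refine ⟨⟨x₁, hx₁⟩, Subtype.ext ?_⟩
      show B x₁ = (y : K)
      have : B x₀ = 0 := LinearMap.mem_ker.1 hx₀
      calc B x₁ = B (x₀ + x₁) := by rw [map_add, this, zero_add]
        _ = (y : K) := by rw [← hxsum, hx]
    set e : (Nᗮ : Submodule ℂ K) ≃L[ℂ] N := ContinuousLinearEquiv.ofBijective e' hker hsurj with he
    have heapp : ∀ x, e x = e' x := fun x => rfl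
    -- B* vanishes on Nᗮ
    have hadjNperp : ∀ x : K, x ∈ Nᗮ → adjoint B x = 0 := by
      intro x hx
      have h0 : ⟪adjoint B x, adjoint B x⟫ = 0 := by
        rw [adjoint_inner_left]
        have : B (adjoint B x) ∈ N := hrangeN _
        have := (Submodule.mem_orthogonal _ _).1 hx _ this
        rw [← inner_conj_symm, this, map_zero]
      exact inner_self_eq_zero.1 h0
    -- B* maps N into Nᗮ
    have hadjN : ∀ x : K, x ∈ N → adjoint B x ∈ Nᗮ := by
      intro x hx
      rw [Submodule.mem_orthogonal]
      intro u hu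
      rw [adjoint_inner_right, show B u = 0 from LinearMap.mem_ker.1 hu, inner_zero_left]
    -- injectivity of D
    set D := B + ContinuousLinearMap.adjoint B with hD
    have hDinj : LinearMap.ker (D : K →ₗ[ℂ] K) = ⊥ := by
      rw [LinearMap.ker_eq_bot']
      intro ξ hξ
      have hξ' : B ξ + adjoint B ξ = 0 := hξ
      have hBξ : B ξ = 0 := by
        have h1 : ⟪B ξ, B ξ + adjoint B ξ⟫ = 0 := by rw [hξ', inner_zero_right]
        rw [inner_add_right, adjoint_inner_right, hBB, inner_zero_left, add_zero] at h1
        exact inner_self_eq_zero.1 h1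
      have hBsξ : adjoint B ξ = 0 := by rwa [hBξ, zero_add] at hξ'
      have : ξ ∈ Set.range B := by rw [h]; exact hBξ
      obtain ⟨η, rfl⟩ := this
      have : ⟪B η, B η⟫ = 0 := by rw [← adjoint_inner_right, hBsξ, inner_zero_right]
      exact inner_self_eq_zero.1 this
    -- surjectivity of D
    have hDsurj : LinearMap.range (D : K →ₗ[ℂ] K) = ⊤ := by
      rw [LinearMap.range_eq_top]
      intro ζ
      obtain ⟨ζ₀, hζ₀, ζ₁, hζ₁, rfl⟩ := Submodule.exists_add_mem_mem_orthogonal (K := N) ζ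
      -- solve D x = ζ₀ with x ∈ Nᗮ
      obtain ⟨x, hx⟩ : ∃ x : Nᗮ, B (x : K) = ζ₀ :=
        ⟨e.symm ⟨ζ₀, hζ₀⟩, by rw [← he'app, ← heapp, e.apply_symm_apply]⟩
      -- solve D y = ζ₁ with y ∈ N
      set a : N →L[ℂ] (Nᗮ : Submodule ℂ K) := adjoint e' with ha
      have hcomp : ((e.symm : N →L[ℂ] (Nᗮ : Submodule ℂ K)).comp e') = ContinuousLinearMap.id ℂ Nᗮ :=
        ContinuousLinearMap.ext fun z => by
          show e.symm (e' z) = z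
          rw [← heapp, e.symm_apply_apply]
      have hasurj : ∀ z : (Nᗮ : Submodule ℂ K), a (adjoint (e.symm : N →L[ℂ] Nᗮ) z) = z := by
        intro z
        have : a.comp (adjoint (e.symm : N →L[ℂ] Nᗮ)) = ContinuousLinearMap.id ℂ Nᗮ := by
          rw [ha, ← adjoint_comp, hcomp, adjoint_id]
        exact congrArg (fun f : (Nᗮ : Submodule ℂ K) →L[ℂ] Nᗮ => f z) this
      set y : N := adjoint (e.symm : N →L[ℂ] Nᗮ) ⟨ζ₁, hζ₁⟩ with hy
      have hay : a y = ⟨ζ₁, hζ₁⟩ := hasurj _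
      have hyadj : adjoint B (y : K) = ζ₁ := by
        have hmem : adjoint B (y : K) - ζ₁ ∈ Nᗮ := Submodule.sub_mem _ (hadjN _ y.2) hζ₁
        have hin : ∀ w : Nᗮ, ⟪(w : K), adjoint B (y : K) - ζ₁⟫ = 0 := by
          intro w
          rw [inner_sub_right, adjoint_inner_right]
          have h1 : ⟪B (w : K), (y : K)⟫ = ⟪e' w, y⟫ := by rw [Submodule.coe_inner, he'app]
          have h2 : ⟪e' w, y⟫ = ⟪w, a y⟫ := (adjoint_inner_right e' (w : Nᗮ) y).symm
          rw [h1, h2, hay, Submodule.coe_inner, sub_self]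
        have := hin ⟨_, hmem⟩
        exact sub_eq_zero.1 (inner_self_eq_zero.1 this)
      refine ⟨(x : K) + (y : K), ?_⟩
      have hxadj : adjoint B (x : K) = 0 := hadjNperp _ x.2
      have hyB : B (y : K) = 0 := LinearMap.mem_ker.1 y.2
      show B ((x:K) + (y:K)) + adjoint B ((x:K)+(y:K)) = ζ₀ + ζ₁
      rw [map_add, map_add, hx, hyB, hxadj, hyadj, add_zero, zero_add]
    -- conclude IsUnit
    set eD : K ≃L[ℂ] K := ContinuousLinearEquiv.ofBijective D hDinj hDsurj with heD
    refine ⟨⟨D, (eD.symm : K →L[ℂ] K), ?_, ?_⟩, rfl⟩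
    · ext z; show D (eD.symm z) = z; exact eD.apply_symm_apply z
    · ext z; show eD.symm (D z) = z; exact eD.symm_apply_apply z
  · rintro ⟨u, hu⟩
    ext ξ
    simp only [Set.mem_setOf_eq]
    constructor
    · rintro ⟨η, rfl⟩; exact hBB η
    · intro hξ
      set D := B + ContinuousLinearMap.adjoint B with hD
      have huinv : ∀ ζ, D ((↑u⁻¹ : K →L[ℂ] K) ζ) = ζ := by
        intro ζ
        have := congrArg (fun f : K →L[ℂ] K => f ζ) u.mul_inv
        simpa [mul_apply_eq_comp, hu] using this
      obtain ⟨η, hDDη⟩ : ∃ η, D (D η) = ξ :=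
        ⟨(↑u⁻¹ : K →L[ℂ] K) ((↑u⁻¹ : K →L[ℂ] K) ξ), by rw [huinv, huinv]⟩
      have hadj2 : ∀ x, adjoint B (adjoint B x) = 0 := by
        intro x
        have hadj0 : adjoint (0 : K →L[ℂ] K) = 0 := by
          ext y
          have h00 : ⟪adjoint (0 : K →L[ℂ] K) y, adjoint (0 : K →L[ℂ] K) y⟫ = 0 := by
            rw [adjoint_inner_left]; simp
          simpa using inner_self_eq_zero.1 h00
        have : adjoint B ∘L adjoint B = 0 := by
          rw [← adjoint_comp, ← mul_def, hB, hadj0]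
        exact congrArg (fun f : K →L[ℂ] K => f x) this
      have hexp : ξ = B (adjoint B η) + adjoint B (B η) := by
        rw [← hDDη]
        show B (B η + adjoint B η) + adjoint B (B η + adjoint B η) = _
        rw [map_add, map_add, hBB, hadj2, zero_add, add_zero]
      have h0 : B (adjoint B (B η)) = 0 := by
        have := congrArg B hexp
        rw [hξ, map_add, hBB, zero_add] at this
        exact this.symm
      have : adjoint B (B η) = 0 := by
        have : ⟪adjoint B (B η), adjoint B (B η)⟫ = 0 := by
          rw [adjoint_inner_left, h0, inner_zero_right]
        exact inner_self_eq_zero.1 this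
      rw [hexp, this, add_zero]
      exact ⟨adjoint B η, rfl⟩

end Key

/-- For a bounded operator `B` with `B² = 0`, the range of `B` is closed
and equals `ker B` iff `D = B + B*` is invertible; consequently a commuting `d`-tuple is
Taylor invertible iff its Dirac operator is invertible. -/
theorem arveson_stmt13 {K : Type*} [NormedAddCommGroup K] [InnerProductSpace ℂ K]
    [CompleteSpace K] (B : K →L[ℂ] K) (hB : B * B = 0)
    {d : ℕ} (T : Fin d → H →L[ℂ] H) (hT : ∀ i j, T i * T j = T j * T i) :
    (Set.range B = {ξ | B ξ = 0} ↔ IsUnit (B + ContinuousLinearMap.adjoint B)) ∧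
    (Set.range (DiracB T) = {ξ | DiracB T ξ = 0} ↔ IsUnit (DiracD T)) := by
  exact ⟨key B hB, key (DiracB T) (DiracB_sq T hT)⟩

end
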